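/- Let χ_G(t) be the chromatic polynomial of a finite simple graph G on n+1 vertices. Then χ_G(t) = ∑_{i=0}^{n+1} (-1)^{n+1-i} b_i t^i, where all b_i are nonnegative integers; i.e., the coefficients of χ_G alternate in sign. -/

import Mathlib

open Finset

/-- The number of proper colorings of `G` with `t` colors. -/
noncomputable def properCount {V : Type*} (G : SimpleGraph V) (t : ℕ) : ℕ :=
  Nat.card {f : V → Fin t // ∀ a b, G.Adj a b → f a ≠ f b}

namespace ChromAux

variable {V : Type*}

/-- Contraction of the edge `ab`, realized on the subtype `{x // x ≠ b}`. -/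
def contract (G : SimpleGraph V) (a b : V) : SimpleGraph {x : V // x ≠ b} where
  Adj x y := x ≠ y ∧ (G.Adj x.1 y.1 ∨ (x.1 = a ∧ G.Adj b y.1) ∨ (y.1 = a ∧ G.Adj x.1 b))
  symm := by
    constructor
    rintro x y ⟨hxy, h⟩
    refine ⟨hxy.symm, ?_⟩
    rcases h with h | ⟨h1, h2⟩ | ⟨h1, h2⟩
    · exact Or.inl h.symm
    · exact Or.inr (Or.inr ⟨h1, h2.symm⟩)
    · exact Or.inr (Or.inl ⟨h1, h2.symm⟩)
  loopless := ⟨fun x h => h.1 rfl⟩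

lemma contract_adj (G : SimpleGraph V) (a b : V) (x y : {x : V // x ≠ b}) :
    (contract G a b).Adj x y ↔
      x ≠ y ∧ (G.Adj x.1 y.1 ∨ (x.1 = a ∧ G.Adj b y.1) ∨ (y.1 = a ∧ G.Adj x.1 b)) := Iff.rfl

lemma properCount_eq_pow [Fintype V] (G : SimpleGraph V)
    (h : ∀ x y, ¬ G.Adj x y) (t : ℕ) : properCount G t = t ^ Fintype.card V := by
  have e : {f : V → Fin t // ∀ a b, G.Adj a b → f a ≠ f b} ≃ (V → Fin t) :=
    Equiv.subtypeUnivEquiv (fun f x y hxy => absurd hxy (h x y))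
  rw [properCount, Nat.card_congr e, Nat.card_fun, Nat.card_eq_fintype_card,
    Nat.card_eq_fintype_card, Fintype.card_fin]

lemma count_split [Fintype V] (G : SimpleGraph V) {a b : V} (hab : G.Adj a b) (t : ℕ) :
    properCount (G.deleteEdges {s(a,b)}) t
      = properCount G t + properCount (contract G a b) t := by
  classical
  set Gd := G.deleteEdges {s(a,b)} with hGd
  have hdadj : ∀ x y : V, Gd.Adj x y ↔ G.Adj x y ∧ s(x,y) ≠ s(a,b) := by
    intro x y
    rw [hGd, SimpleGraph.deleteEdges_adj, Set.mem_singleton_iff]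
  have hiff : ∀ f : V → Fin t,
      (∀ x y, G.Adj x y → f x ≠ f y) ↔
        ((∀ x y, Gd.Adj x y → f x ≠ f y) ∧ f a ≠ f b) := by
    intro f
    constructor
    · intro hf
      exact ⟨fun x y hxy => hf x y ((hdadj x y).mp hxy).1, hf a b hab⟩
    · rintro ⟨hf, hne⟩ x y hxy
      by_cases hc : s(x,y) = s(a,b)
      · rcases Sym2.eq_iff.mp hc with ⟨rfl, rfl⟩ | ⟨rfl, rfl⟩
        · exact hne
        · exact fun h => hne h.symm
      · exact hf x y ((hdadj x y).mpr ⟨hxy, hc⟩)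
  have e2 : {f : V → Fin t // (∀ x y, Gd.Adj x y → f x ≠ f y) ∧ f a = f b}
      ≃ {g : {x : V // x ≠ b} → Fin t //
          ∀ x y, (contract G a b).Adj x y → g x ≠ g y} := by
    refine ⟨fun f => ⟨fun x => f.1 x.1, ?_⟩,
      fun g => ⟨fun x => if h : x = b then g.1 ⟨a, hab.ne⟩ else g.1 ⟨x, h⟩, ?_, ?_⟩, ?_, ?_⟩
    · intro x y hc
      obtain ⟨hne, hcase⟩ := (contract_adj G a b x y).mp hc
      have hxy : x.1 ≠ y.1 := fun h => hne (Subtype.ext h)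
      rcases hcase with hadj | ⟨hxa, hby⟩ | ⟨hya, hxb⟩
      · refine f.2.1 x.1 y.1 ((hdadj _ _).mpr ⟨hadj, fun hcc => ?_⟩)
        rcases Sym2.eq_iff.mp hcc with ⟨-, hyb⟩ | ⟨hxb2, -⟩
        · exact y.2 hyb
        · exact x.2 hxb2
      · have h1 : f.1 b ≠ f.1 y.1 := by
          refine f.2.1 b y.1 ((hdadj _ _).mpr ⟨hby, fun hcc => ?_⟩)
          rcases Sym2.eq_iff.mp hcc with ⟨hba, -⟩ | ⟨-, hya⟩
          · exact hab.ne' hba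
          · exact hxy (hxa.trans hya.symm)
        simpa [hxa, f.2.2] using h1
      · have h1 : f.1 x.1 ≠ f.1 b := by
          refine f.2.1 x.1 b ((hdadj _ _).mpr ⟨hxb, fun hcc => ?_⟩)
          rcases Sym2.eq_iff.mp hcc with ⟨hxa2, -⟩ | ⟨hxb3, -⟩
          · exact hxy (hxa2.trans hya.symm)
          · exact x.2 hxb3
        simpa [hya, f.2.2] using h1
    · next g =>
      intro x y hxy
      obtain ⟨hadj, hnot⟩ := (hdadj x y).mp hxy
      rw [Ne, Sym2.eq_iff, not_or] at hnot
      dsimp only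
      by_cases hx : x = b <;> by_cases hy : y = b
      · exact absurd (hx.trans hy.symm) hadj.ne
      · rw [dif_pos hx, dif_neg hy]
        refine g.2 ⟨a, hab.ne⟩ ⟨y, hy⟩ ((contract_adj G a b _ _).mpr ⟨?_, Or.inr (Or.inl ⟨rfl, hx ▸ hadj⟩)⟩)
        intro h
        have hay : a = y := congrArg Subtype.val h
        exact hnot.2 ⟨hx, hay.symm⟩
      · rw [dif_neg hx, dif_pos hy]
        refine g.2 ⟨x, hx⟩ ⟨a, hab.ne⟩ ((contract_adj G a b _ _).mpr ⟨?_, Or.inr (Or.inr ⟨rfl, hy ▸ hadj⟩)⟩)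
        intro h
        have hxa : x = a := congrArg Subtype.val h
        exact hnot.1 ⟨hxa, hy⟩
      · rw [dif_neg hx, dif_neg hy]
        exact g.2 ⟨x, hx⟩ ⟨y, hy⟩ ((contract_adj G a b _ _).mpr ⟨fun h => hadj.ne (congrArg Subtype.val h),
          Or.inl hadj⟩)
    · next g =>
      dsimp only
      rw [dif_neg hab.ne, dif_pos rfl]
    · intro f
      refine Subtype.ext (funext fun x => ?_)
      dsimp only
      split
      · next h => rw [h, ← f.2.2]
      · rfl
    · intro g
      refine Subtype.ext (funext fun x => ?_)
      dsimp only
      rw [dif_neg x.2]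
  have esum : {f : V → Fin t // ∀ x y, Gd.Adj x y → f x ≠ f y}
      ≃ {f : V → Fin t // (∀ x y, Gd.Adj x y → f x ≠ f y) ∧ f a ≠ f b}
        ⊕ {f : V → Fin t // (∀ x y, Gd.Adj x y → f x ≠ f y) ∧ f a = f b} := by
    refine Equiv.trans
      (Equiv.sumCompl (fun x : {f : V → Fin t // ∀ x y, Gd.Adj x y → f x ≠ f y} =>
        x.1 a ≠ x.1 b)).symm
      (Equiv.sumCongr (Equiv.subtypeSubtypeEquivSubtypeInter
        (fun f : V → Fin t => ∀ x y, Gd.Adj x y → f x ≠ f y) (fun f => f a ≠ f b)) ?_)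
    exact (Equiv.subtypeEquivRight (fun x => not_not)).trans
      (Equiv.subtypeSubtypeEquivSubtypeInter
        (fun f : V → Fin t => ∀ x y, Gd.Adj x y → f x ≠ f y) (fun f => f a = f b))
  have : properCount Gd t
      = Nat.card {f : V → Fin t // (∀ x y, Gd.Adj x y → f x ≠ f y) ∧ f a ≠ f b}
        + Nat.card {f : V → Fin t // (∀ x y, Gd.Adj x y → f x ≠ f y) ∧ f a = f b} := by
    rw [properCount, Nat.card_congr esum, Nat.card_sum]
  rw [this, properCount, properCount, Nat.card_congr e2,
    Nat.card_congr (Equiv.subtypeEquivRight hiff)]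

lemma contract_ncard_lt [Fintype V] (G : SimpleGraph V) {a b : V} (hab : G.Adj a b) :
    (contract G a b).edgeSet.ncard < G.edgeSet.ncard := by
  classical
  set r : V → {x : V // x ≠ b} := fun x => if h : x = b then ⟨a, hab.ne⟩ else ⟨x, h⟩ with hr
  have hrx : ∀ (x : V) (hx : x ≠ b), r x = ⟨x, hx⟩ := fun x hx => dif_neg hx
  have hrb : r b = ⟨a, hab.ne⟩ := dif_pos rfl
  have hsub : (contract G a b).edgeSet ⊆ Sym2.map r '' (G.edgeSet \ {s(a,b)}) := by
    intro e he
    induction e using Sym2.ind with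
    | _ x y =>
      rw [SimpleGraph.mem_edgeSet] at he
      obtain ⟨hne, hcase⟩ := (contract_adj G a b x y).mp he
      have hxy : x.1 ≠ y.1 := fun h => hne (Subtype.ext h)
      rcases hcase with hadj | ⟨hxa, hby⟩ | ⟨hya, hxb⟩
      · refine ⟨s(x.1, y.1), ⟨(SimpleGraph.mem_edgeSet _).mpr hadj, fun hcc => ?_⟩, ?_⟩
        · rcases Sym2.eq_iff.mp hcc with ⟨-, hyb⟩ | ⟨hxb2, -⟩
          · exact y.2 hyb
          · exact x.2 hxb2
        · rw [Sym2.map_pair_eq, hrx x.1 x.2, hrx y.1 y.2]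
      · refine ⟨s(b, y.1), ⟨(SimpleGraph.mem_edgeSet _).mpr hby, fun hcc => ?_⟩, ?_⟩
        · rcases Sym2.eq_iff.mp hcc with ⟨hba, -⟩ | ⟨-, hya⟩
          · exact hab.ne' hba
          · exact hxy (hxa.trans hya.symm)
        · rw [Sym2.map_pair_eq, hrb, hrx y.1 y.2]
          have hx' : x = (⟨a, hab.ne⟩ : {x : V // x ≠ b}) := Subtype.ext hxa
          rw [hx']
      · refine ⟨s(x.1, b), ⟨(SimpleGraph.mem_edgeSet _).mpr hxb, fun hcc => ?_⟩, ?_⟩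
        · rcases Sym2.eq_iff.mp hcc with ⟨hxa2, -⟩ | ⟨hxb3, -⟩
          · exact hxy (hxa2.trans hya.symm)
          · exact x.2 hxb3
        · rw [Sym2.map_pair_eq, hrb, hrx x.1 x.2]
          have hy' : y = (⟨a, hab.ne⟩ : {x : V // x ≠ b}) := Subtype.ext hya
          rw [hy']
  have hfin : (G.edgeSet \ {s(a,b)}).Finite := (Set.toFinite _)
  have h1 : (contract G a b).edgeSet.ncard ≤ (G.edgeSet \ {s(a,b)}).ncard :=
    le_trans (Set.ncard_le_ncard hsub (hfin.image _)) (Set.ncard_image_le hfin)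
  have h2 : (G.edgeSet \ {s(a,b)}).ncard = G.edgeSet.ncard - 1 :=
    Set.ncard_diff_singleton_of_mem ((SimpleGraph.mem_edgeSet _).mpr hab)
  have h3 : 0 < G.edgeSet.ncard :=
    (Set.ncard_pos (Set.toFinite _)).mpr ⟨_, (SimpleGraph.mem_edgeSet _).mpr hab⟩
  omega

lemma main : ∀ (N : ℕ) (V : Type u) [Fintype V] (G : SimpleGraph V),
    Fintype.card V + G.edgeSet.ncard ≤ N →
    ∃ b : ℕ → ℕ, ∀ t : ℕ, (properCount G t : ℤ)
      = ∑ i ∈ range (Fintype.card V + 1),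
          (-1) ^ (Fintype.card V - i) * (b i : ℤ) * (t : ℤ) ^ i := by
  have base : ∀ (V : Type u) [Fintype V] (G : SimpleGraph V), (∀ x y, ¬ G.Adj x y) →
      ∃ b : ℕ → ℕ, ∀ t : ℕ, (properCount G t : ℤ)
        = ∑ i ∈ range (Fintype.card V + 1),
            (-1) ^ (Fintype.card V - i) * (b i : ℤ) * (t : ℤ) ^ i := by
    intro V _ G hG
    refine ⟨fun i => if i = Fintype.card V then 1 else 0, fun t => ?_⟩
    rw [properCount_eq_pow G hG]
    rw [Finset.sum_eq_single (Fintype.card V)]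
    · simp
    · intro i _ hne
      simp [hne]
    · intro h
      exact absurd (self_mem_range_succ _) h
  intro N
  induction N with
  | zero =>
    intro V _ G hN
    refine base V G fun x y h => ?_
    have : Fintype.card V = 0 := by omega
    exact (Fintype.card_eq_zero_iff.mp this).false x
  | succ N ih =>
    intro V _ G hN
    by_cases hadj : ∀ x y, ¬ G.Adj x y
    · exact base V G hadj
    · push_neg at hadj
      obtain ⟨a, b, hab⟩ := hadj
      set m := Fintype.card V with hm
      have hm1 : 0 < m := Fintype.card_pos_iff.mpr ⟨a⟩
      have hE1 : 0 < G.edgeSet.ncard :=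
        (Set.ncard_pos (Set.toFinite _)).mpr ⟨_, (SimpleGraph.mem_edgeSet _).mpr hab⟩
      -- deleted graph
      have hdcard : (G.deleteEdges {s(a,b)}).edgeSet.ncard = G.edgeSet.ncard - 1 := by
        rw [SimpleGraph.edgeSet_deleteEdges]
        exact Set.ncard_diff_singleton_of_mem ((SimpleGraph.mem_edgeSet _).mpr hab)
      obtain ⟨bd, hbd⟩ := ih V (G.deleteEdges {s(a,b)}) (by omega)
      -- contracted graph
      classical
      have hccard : Fintype.card {x : V // x ≠ b} = m - 1 := by
        have h1 : Fintype.card {x : V // ¬ x = b} = m - Fintype.card {x : V // x = b} :=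
          Fintype.card_subtype_compl _
        have h2 : Fintype.card {x : V // x = b} = 1 := Fintype.card_subtype_eq b
        rw [h2] at h1
        exact h1
      have hclt := contract_ncard_lt G hab
      obtain ⟨bc, hbc⟩ := ih {x : V // x ≠ b} (contract G a b) (by omega)
      rw [hccard] at hbc
      refine ⟨fun i => bd i + if i < m then bc i else 0, fun t => ?_⟩
      have hsplit := count_split G hab t
      have hsplitz : (properCount (G.deleteEdges {s(a,b)}) t : ℤ)
          = properCount G t + properCount (contract G a b) t := by exact_mod_cast hsplit
      have hmm : m - 1 + 1 = m := by omega
      rw [hmm] at hbc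
      have key : ∑ i ∈ range (m+1),
            (-1:ℤ)^(m-i) * ((bd i + if i < m then bc i else 0 : ℕ):ℤ) * (t:ℤ)^i
          = (∑ i ∈ range (m+1), (-1:ℤ)^(m-i) * (bd i : ℤ) * (t:ℤ)^i)
            - ∑ i ∈ range m, (-1:ℤ)^(m-1-i) * (bc i : ℤ) * (t:ℤ)^i := by
        have hterm : ∀ i ∈ range (m+1),
            (-1:ℤ)^(m-i) * ((bd i + if i < m then bc i else 0 : ℕ):ℤ) * (t:ℤ)^i
              = (-1:ℤ)^(m-i) * (bd i : ℤ) * (t:ℤ)^i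
                + (-1:ℤ)^(m-i) * (if i < m then (bc i : ℤ) else 0) * (t:ℤ)^i := by
          intro i _
          push_cast [apply_ite (fun n : ℕ => (n : ℤ))]
          ring
        rw [Finset.sum_congr rfl hterm, Finset.sum_add_distrib]
        congr 1
        rw [Finset.sum_range_succ, if_neg (lt_irrefl m), mul_zero, zero_mul, add_zero,
          ← Finset.sum_neg_distrib]
        refine Finset.sum_congr rfl fun i hi => ?_
        rw [mem_range] at hi
        rw [if_pos hi]
        have h4 : m - i = (m - 1 - i) + 1 := by omega
        rw [h4, pow_succ]
        ring
      rw [key, ← hbd t, ← hbc t]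
      omega

end ChromAux


/-- The coefficients of the chromatic polynomial of a finite simple graph on
`n+1` vertices alternate in sign: `χ_G(t) = ∑ (-1)^{n+1-i} b_i t^i` with the
`b_i` nonnegative integers. -/
theorem chromatic_coefficients_alternate (n : ℕ) (V : Type*) [Fintype V]
    (G : SimpleGraph V) (hV : Fintype.card V = n + 1) :
    ∃ b : ℕ → ℕ, ∀ t : ℕ,
      (properCount G t : ℤ)
        = ∑ i ∈ Finset.range (n + 2), (-1) ^ (n + 1 - i) * (b i : ℤ) * (t : ℤ) ^ i := by
  obtain ⟨b, hb⟩ := ChromAux.main (Fintype.card V + G.edgeSet.ncard) V G le_rfl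
  refine ⟨b, fun t => ?_⟩
  have h := hb t
  rw [hV] at h
  exact h
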